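/- With d(u) = M(u)/u^{θ_2} as above, lim_{k→∞} d(2^k) = 2/5 and lim_{k→∞} d(9·2^k) = 64/(5·9^{θ_2}), and these two limits are distinct; hence d(u) does not converge as u → ∞. -/

import Mathlib

open Filter Finset

/-- `M(u)`: number of `(m,n)` with `m ≥ n ≥ 0`, `C(m,n)` odd and `m + 2n < u`. -/
noncomputable def Mfun (u : ℕ) : ℕ :=
  {mn : ℕ × ℕ | mn.2 ≤ mn.1 ∧ mn.1 + 2 * mn.2 < u ∧ ¬ 2 ∣ Nat.choose mn.1 mn.2}.ncard

/-- `θ₂ = log 3 / log 2`. -/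
noncomputable def theta2 : ℝ := Real.log 3 / Real.log 2

/-- `d(u) = M(u)/u^{θ₂}`. -/
noncomputable def dfun (u : ℕ) : ℝ := (Mfun u : ℝ) / (u : ℝ) ^ theta2


lemma choose_two_dvd_iff (m n : ℕ) :
    2 ∣ Nat.choose m n ↔ 2 ∣ Nat.choose (m % 2) (n % 2) * Nat.choose (m / 2) (n / 2) := by
  haveI : Fact (Nat.Prime 2) := ⟨Nat.prime_two⟩
  have h := (Choose.choose_modEq_choose_mod_mul_choose_div_nat (n := m) (k := n) (p := 2))
  unfold Nat.ModEq at h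
  constructor <;> intro hd <;> omega

lemma par_ee (a b : ℕ) : 2 ∣ Nat.choose (2*a) (2*b) ↔ 2 ∣ Nat.choose a b := by
  rw [choose_two_dvd_iff]
  simp [Nat.mul_div_cancel_left, Nat.mul_mod_right]

lemma par_oe (a b : ℕ) : 2 ∣ Nat.choose (2*a+1) (2*b) ↔ 2 ∣ Nat.choose a b := by
  rw [choose_two_dvd_iff]
  have h1 : (2*a+1) % 2 = 1 := by omega
  have h2 : (2*a+1) / 2 = a := by omega
  simp [h1, h2, Nat.mul_mod_right, Nat.mul_div_cancel_left]

lemma par_oo (a b : ℕ) : 2 ∣ Nat.choose (2*a+1) (2*b+1) ↔ 2 ∣ Nat.choose a b := by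
  rw [choose_two_dvd_iff]
  have h1 : (2*a+1) % 2 = 1 := by omega
  have h2 : (2*a+1) / 2 = a := by omega
  have h3 : (2*b+1) % 2 = 1 := by omega
  have h4 : (2*b+1) / 2 = b := by omega
  simp [h1, h2, h3, h4]

lemma par_eo (a b : ℕ) : 2 ∣ Nat.choose (2*a) (2*b+1) := by
  rw [choose_two_dvd_iff]
  have h3 : (2*b+1) % 2 = 1 := by omega
  simp [h3, Nat.mul_mod_right]

def Sfin (u : ℕ) : Finset (ℕ × ℕ) :=
  (Finset.range u ×ˢ Finset.range u).filter
    (fun mn => mn.2 ≤ mn.1 ∧ mn.1 + 2 * mn.2 < u ∧ ¬ 2 ∣ Nat.choose mn.1 mn.2)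

lemma mem_Sfin {u : ℕ} {mn : ℕ × ℕ} :
    mn ∈ Sfin u ↔ mn.2 ≤ mn.1 ∧ mn.1 + 2 * mn.2 < u ∧ ¬ 2 ∣ Nat.choose mn.1 mn.2 := by
  simp only [Sfin, mem_filter, mem_product, mem_range]
  constructor
  · tauto
  · rintro ⟨h1, h2, h3⟩
    exact ⟨⟨by omega, by omega⟩, h1, h2, h3⟩

lemma Mfun_eq_card (u : ℕ) : Mfun u = (Sfin u).card := by
  rw [Mfun, show {mn : ℕ × ℕ | mn.2 ≤ mn.1 ∧ mn.1 + 2 * mn.2 < u ∧ ¬ 2 ∣ Nat.choose mn.1 mn.2}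
      = ↑(Sfin u) by ext mn; simp [mem_Sfin], Set.ncard_coe_finset]

lemma Sfin_decomp (u : ℕ) :
    Sfin u = ((Sfin ((u+1)/2)).image (fun ab => (2*ab.1, 2*ab.2)))
      ∪ ((Sfin (u/2)).image (fun ab => (2*ab.1+1, 2*ab.2)))
      ∪ ((Sfin (u/2-1)).image (fun ab => (2*ab.1+1, 2*ab.2+1))) := by
  ext ⟨m, n⟩
  simp only [mem_union, mem_image, mem_Sfin, Prod.mk.injEq, Prod.exists]
  constructor
  · rintro ⟨h1, h2, h3⟩
    rcases Nat.even_or_odd m with ⟨a, ha⟩ | ⟨a, ha⟩ <;>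
      rcases Nat.even_or_odd n with ⟨b, hb⟩ | ⟨b, hb⟩
    · refine Or.inl (Or.inl ⟨a, b, ⟨by omega, by omega, fun hd => h3 ?_⟩, by omega, by omega⟩)
      rw [show m = 2*a by omega, show n = 2*b by omega]
      exact (par_ee a b).mpr hd
    · exfalso
      apply h3
      rw [show m = 2*a by omega, show n = 2*b+1 by omega]
      exact par_eo a b
    · refine Or.inl (Or.inr ⟨a, b, ⟨by omega, by omega, fun hd => h3 ?_⟩, by omega, by omega⟩)
      rw [show m = 2*a+1 by omega, show n = 2*b by omega]
      exact (par_oe a b).mpr hd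
    · refine Or.inr ⟨a, b, ⟨by omega, by omega, fun hd => h3 ?_⟩, by omega, by omega⟩
      rw [show m = 2*a+1 by omega, show n = 2*b+1 by omega]
      exact (par_oo a b).mpr hd
  · rintro ((⟨a, b, ⟨h1, h2, h3⟩, hm, hn⟩ | ⟨a, b, ⟨h1, h2, h3⟩, hm, hn⟩) |
      ⟨a, b, ⟨h1, h2, h3⟩, hm, hn⟩) <;> subst hm <;> subst hn
    · exact ⟨by omega, by omega, fun hd => h3 ((par_ee a b).mp hd)⟩
    · exact ⟨by omega, by omega, fun hd => h3 ((par_oe a b).mp hd)⟩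
    · exact ⟨by omega, by omega, fun hd => h3 ((par_oo a b).mp hd)⟩

lemma Sfin_card (u : ℕ) :
    (Sfin u).card = (Sfin ((u+1)/2)).card + (Sfin (u/2)).card + (Sfin (u/2-1)).card := by
  have inj1 : Function.Injective (fun ab : ℕ × ℕ => (2*ab.1, 2*ab.2)) := by
    rintro ⟨a, b⟩ ⟨c, d⟩ h; simp only [Prod.mk.injEq] at h ⊢; omega
  have inj2 : Function.Injective (fun ab : ℕ × ℕ => (2*ab.1+1, 2*ab.2)) := by
    rintro ⟨a, b⟩ ⟨c, d⟩ h; simp only [Prod.mk.injEq] at h ⊢; omega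
  have inj3 : Function.Injective (fun ab : ℕ × ℕ => (2*ab.1+1, 2*ab.2+1)) := by
    rintro ⟨a, b⟩ ⟨c, d⟩ h; simp only [Prod.mk.injEq] at h ⊢; omega
  have d12 : Disjoint ((Sfin ((u+1)/2)).image (fun ab => (2*ab.1, 2*ab.2)))
      ((Sfin (u/2)).image (fun ab => (2*ab.1+1, 2*ab.2))) := by
    rw [Finset.disjoint_left]
    rintro ⟨m, n⟩ h1 h2
    simp only [mem_image, Prod.mk.injEq, Prod.exists] at h1 h2
    obtain ⟨a, b, -, hm, -⟩ := h1; obtain ⟨c, d, -, hm', -⟩ := h2; omega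
  have d13 : Disjoint (((Sfin ((u+1)/2)).image (fun ab => (2*ab.1, 2*ab.2)))
        ∪ ((Sfin (u/2)).image (fun ab => (2*ab.1+1, 2*ab.2))))
      ((Sfin (u/2-1)).image (fun ab => (2*ab.1+1, 2*ab.2+1))) := by
    rw [Finset.disjoint_left]
    rintro ⟨m, n⟩ h1 h2
    simp only [mem_union, mem_image, Prod.mk.injEq, Prod.exists] at h1 h2
    obtain ⟨a, b, -, -, hn⟩ := h2
    rcases h1 with ⟨c, d, -, hm, hn'⟩ | ⟨c, d, -, hm, hn'⟩ <;> omega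
  rw [Sfin_decomp u, Finset.card_union_of_disjoint d13, Finset.card_union_of_disjoint d12,
    Finset.card_image_of_injective _ inj1, Finset.card_image_of_injective _ inj2,
    Finset.card_image_of_injective _ inj3]


lemma Mfun_rec (u : ℕ) : Mfun u = Mfun ((u+1)/2) + Mfun (u/2) + Mfun (u/2-1) := by
  simp only [Mfun_eq_card]; exact Sfin_card u

lemma e0 : Mfun 0 = 0 := by rw [Mfun_eq_card]; decide

lemma e1 : Mfun 1 = 1 := by rw [Mfun_eq_card]; decide

lemma fib_le_two_pow (k : ℕ) : Nat.fib k ≤ 2^k := by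
  induction k using Nat.strong_induction_on with
  | _ k ih =>
    match k with
    | 0 => simp
    | 1 => simp [Nat.fib_one]
    | (n+2) =>
      rw [Nat.fib_add_two]
      have h1 := ih n (by omega)
      have h2 := ih (n+1) (by omega)
      calc Nat.fib n + Nat.fib (n+1) ≤ 2^n + 2^(n+1) := by omega
        _ ≤ 2^(n+2) := by ring_nf; omega

lemma small_vals : Mfun 2 = 2 ∧ Mfun 3 = 3 ∧ Mfun 4 = 5 ∧ Mfun 5 = 6 ∧ Mfun 6 = 8
    ∧ Mfun 7 = 10 ∧ Mfun 8 = 13 ∧ Mfun 9 = 14 := by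
  have h2 := Mfun_rec 2; have h3 := Mfun_rec 3; have h4 := Mfun_rec 4
  have h5 := Mfun_rec 5; have h6 := Mfun_rec 6; have h7 := Mfun_rec 7
  have h8 := Mfun_rec 8; have h9 := Mfun_rec 9
  norm_num [e0, e1] at h2 h3 h4 h5 h6 h7 h8 h9
  omega

lemma case1 (k : ℕ) :
    5 * (Mfun (2^k) : ℤ) = 2*3^k + Nat.fib k + 3 * Nat.fib (k+1) ∧
    5 * (Mfun (2^k - 1) : ℤ) = 2*3^k + Nat.fib k - 2 * Nat.fib (k+1) ∧
    5 * (Mfun (2^k - 2) : ℤ) = 2*3^k - 4 * Nat.fib k - 2 * Nat.fib (k+1) := by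
  induction k with
  | zero => norm_num [e0, e1]
  | succ k ih =>
    obtain ⟨ia, ib, ic⟩ := ih
    have hp : (2:ℕ)^(k+1) = 2 * 2^k := by ring
    have hp1 : (1:ℕ) ≤ 2^k := Nat.one_le_two_pow
    have ra := Mfun_rec (2^(k+1))
    have rb := Mfun_rec (2^(k+1) - 1)
    have rc := Mfun_rec (2^(k+1) - 2)
    rw [show ((2^(k+1))/2 - 1 : ℕ) = 2^k - 1 by omega, show ((2^(k+1)+1)/2 : ℕ) = 2^k by omega,
      show ((2^(k+1))/2 : ℕ) = 2^k by omega] at ra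
    rw [show ((2^(k+1) - 1)/2 - 1 : ℕ) = 2^k - 2 by omega,
      show ((2^(k+1) - 1+1)/2 : ℕ) = 2^k by omega,
      show ((2^(k+1) - 1)/2 : ℕ) = 2^k - 1 by omega] at rb
    rw [show ((2^(k+1) - 2)/2 - 1 : ℕ) = 2^k - 2 by omega,
      show ((2^(k+1) - 2+1)/2 : ℕ) = 2^k - 1 by omega,
      show ((2^(k+1) - 2)/2 : ℕ) = 2^k - 1 by omega] at rc
    have F2 : (Nat.fib (k+2) : ℤ) = Nat.fib k + Nat.fib (k+1) := by
      rw [Nat.fib_add_two]; push_cast; ring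
    have h3 : (3:ℤ)^(k+1) = 3*3^k := by ring
    refine ⟨?_, ?_, ?_⟩
    · rw [ra]; push_cast [F2, h3] at *; linarith
    · rw [rb]; push_cast [F2, h3] at *; linarith
    · rw [rc]; push_cast [F2, h3] at *; linarith

lemma case2 (k : ℕ) :
    5 * (Mfun (9*2^k) : ℤ) = 64*3^k + 7 * Nat.fib k + 6 * Nat.fib (k+1) ∧
    5 * (Mfun (9*2^k - 1) : ℤ) = 64*3^k - 8 * Nat.fib k + Nat.fib (k+1) ∧
    5 * (Mfun (9*2^k - 2) : ℤ) = 64*3^k + 2 * Nat.fib k - 14 * Nat.fib (k+1) := by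
  induction k with
  | zero =>
    obtain ⟨-, -, -, -, -, h7, h8, h9⟩ := small_vals
    norm_num [h7, h8, h9]
  | succ k ih =>
    obtain ⟨ia, ib, ic⟩ := ih
    have hp : (9:ℕ)*2^(k+1) = 2 * (9*2^k) := by ring
    have hp1 : (1:ℕ) ≤ 2^k := Nat.one_le_two_pow
    have ra := Mfun_rec (9*2^(k+1))
    have rb := Mfun_rec (9*2^(k+1) - 1)
    have rc := Mfun_rec (9*2^(k+1) - 2)
    rw [show ((9*2^(k+1))/2 - 1 : ℕ) = 9*2^k - 1 by omega,
      show ((9*2^(k+1)+1)/2 : ℕ) = 9*2^k by omega,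
      show ((9*2^(k+1))/2 : ℕ) = 9*2^k by omega] at ra
    rw [show ((9*2^(k+1) - 1)/2 - 1 : ℕ) = 9*2^k - 2 by omega,
      show ((9*2^(k+1) - 1+1)/2 : ℕ) = 9*2^k by omega,
      show ((9*2^(k+1) - 1)/2 : ℕ) = 9*2^k - 1 by omega] at rb
    rw [show ((9*2^(k+1) - 2)/2 - 1 : ℕ) = 9*2^k - 2 by omega,
      show ((9*2^(k+1) - 2+1)/2 : ℕ) = 9*2^k - 1 by omega,
      show ((9*2^(k+1) - 2)/2 : ℕ) = 9*2^k - 1 by omega] at rc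
    have F2 : (Nat.fib (k+2) : ℤ) = Nat.fib k + Nat.fib (k+1) := by
      rw [Nat.fib_add_two]; push_cast; ring
    have h3 : (3:ℤ)^(k+1) = 3*3^k := by ring
    refine ⟨?_, ?_, ?_⟩
    · rw [ra]; push_cast [F2, h3] at *; linarith
    · rw [rb]; push_cast [F2, h3] at *; linarith
    · rw [rc]; push_cast [F2, h3] at *; linarith

lemma case1a (k : ℕ) : 5 * (Mfun (2^k) : ℤ) = 2*3^k + Nat.fib k + 3 * Nat.fib (k+1) :=
  (case1 k).1

lemma case2a (k : ℕ) : 5 * (Mfun (9*2^k) : ℤ) = 64*3^k + 7 * Nat.fib k + 6 * Nat.fib (k+1) :=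
  (case2 k).1

lemma log2_pos : (0:ℝ) < Real.log 2 := Real.log_pos (by norm_num)

lemma two_rpow_theta2 : (2:ℝ) ^ theta2 = 3 := by
  rw [theta2, Real.rpow_def_of_pos (by norm_num)]
  rw [show Real.log 2 * (Real.log 3 / Real.log 2) = Real.log 3 by
    field_simp]
  exact Real.exp_log (by norm_num)

lemma denom1 (k : ℕ) : ((2^k : ℕ) : ℝ) ^ theta2 = 3^k := by
  rw [show ((2^k:ℕ):ℝ) = (2:ℝ)^(k:ℕ) by push_cast; ring,
    ← Real.rpow_natCast (2:ℝ) k, ← Real.rpow_mul (by norm_num), mul_comm,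
    Real.rpow_mul (by norm_num), two_rpow_theta2, Real.rpow_natCast]

lemma denom2 (k : ℕ) : ((9*2^k : ℕ) : ℝ) ^ theta2 = (9:ℝ)^theta2 * 3^k := by
  rw [show ((9*2^k:ℕ):ℝ) = (9:ℝ) * ((2^k:ℕ):ℝ) by push_cast; ring,
    Real.mul_rpow (by norm_num) (by positivity), denom1]

lemma err_tendsto (a b : ℕ) :
    Tendsto (fun k => ((a * Nat.fib k + b * Nat.fib (k+1) : ℕ) : ℝ) / 3^k) atTop (nhds 0) := by
  have hg : Tendsto (fun k : ℕ => ((a + 2*b : ℕ) : ℝ) * (2/3)^k) atTop (nhds 0) := by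
    have := (tendsto_pow_atTop_nhds_zero_of_lt_one (by norm_num : (0:ℝ) ≤ 2/3)
      (by norm_num : (2:ℝ)/3 < 1)).const_mul ((a + 2*b : ℕ) : ℝ)
    simpa using this
  apply squeeze_zero (fun k => by positivity) _ hg
  intro k
  have hf1 : (Nat.fib k : ℝ) ≤ 2^k := by exact_mod_cast fib_le_two_pow k
  have hf2 : (Nat.fib (k+1) : ℝ) ≤ 2*2^k := by
    have := fib_le_two_pow (k+1)
    have h2 : (2:ℕ)^(k+1) = 2*2^k := by ring
    exact_mod_cast h2 ▸ this
  rw [div_le_iff₀ (by positivity : (0:ℝ) < 3^k)]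
  have key : ((a + 2*b : ℕ) : ℝ) * (2/3)^k * 3^k = (a + 2*b : ℕ) * 2^k := by
    rw [div_pow]; field_simp
  rw [key]
  push_cast
  have ha : (0:ℝ) ≤ a := by positivity
  have hb : (0:ℝ) ≤ b := by positivity
  have hp : (0:ℝ) ≤ 2^k := by positivity
  nlinarith [mul_le_mul_of_nonneg_left hf1 ha, mul_le_mul_of_nonneg_left hf2 hb]

lemma limit1 : Tendsto (fun k : ℕ => dfun (2 ^ k)) atTop (nhds (2 / 5)) := by
  have key : ∀ k : ℕ, dfun (2^k)
      = 2/5 + (1/5) * (((1 * Nat.fib k + 3 * Nat.fib (k+1) : ℕ) : ℝ) / 3^k) := by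
    intro k
    have h := case1a k
    have h5 : ((Mfun (2^k) : ℝ)) = (2*3^k + Nat.fib k + 3*Nat.fib (k+1))/5 := by
      have : (5:ℝ) * (Mfun (2^k) : ℝ) = 2*3^k + Nat.fib k + 3 * Nat.fib (k+1) := by
        exact_mod_cast h
      linarith
    rw [dfun, denom1, h5]
    have h3 : (0:ℝ) < 3^k := by positivity
    push_cast
    field_simp
    ring
  simp only [key]
  have := ((err_tendsto 1 3).const_mul (1/5 : ℝ)).const_add (2/5 : ℝ)
  simpa using this

lemma limit2 : Tendsto (fun k : ℕ => dfun (9 * 2 ^ k)) atTop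
    (nhds (64 / (5 * (9 : ℝ) ^ theta2))) := by
  have h9 : (0:ℝ) < (9:ℝ)^theta2 := Real.rpow_pos_of_pos (by norm_num) _
  have key : ∀ k : ℕ, dfun (9*2^k)
      = 64/(5*(9:ℝ)^theta2)
        + (1/(5*(9:ℝ)^theta2)) * (((7 * Nat.fib k + 6 * Nat.fib (k+1) : ℕ) : ℝ) / 3^k) := by
    intro k
    have h := case2a k
    have h5 : ((Mfun (9*2^k) : ℝ)) = (64*3^k + 7*Nat.fib k + 6*Nat.fib (k+1))/5 := by
      have : (5:ℝ) * (Mfun (9*2^k) : ℝ) = 64*3^k + 7*Nat.fib k + 6 * Nat.fib (k+1) := by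
        exact_mod_cast h
      linarith
    rw [dfun, denom2, h5]
    have h3 : (0:ℝ) < 3^k := by positivity
    push_cast
    field_simp
    ring
  simp only [key]
  have := ((err_tendsto 7 6).const_mul (1/(5*(9:ℝ)^theta2))).const_add (64/(5*(9:ℝ)^theta2))
  simpa using this

lemma theta2_gt : (19:ℝ)/12 < theta2 := by
  rw [theta2, lt_div_iff₀ log2_pos]
  have h := Real.log_lt_log (by positivity : (0:ℝ) < 2^19) (by norm_num : (2:ℝ)^19 < 3^12)
  rw [Real.log_pow, Real.log_pow] at h
  push_cast at h
  linarith

lemma ne25 : (2 : ℝ) / 5 ≠ 64 / (5 * (9 : ℝ) ^ theta2) := by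
  intro h
  have h9 : (0:ℝ) < (9:ℝ)^theta2 := Real.rpow_pos_of_pos (by norm_num) _
  have h32 : (9:ℝ)^theta2 = 32 := by
    field_simp at h
    linarith
  have hlog : theta2 * Real.log 9 = Real.log 32 := by
    rw [← Real.log_rpow (by norm_num), h32]
  have l9 : Real.log 9 = 2 * Real.log 3 := by
    rw [show (9:ℝ) = 3^2 by norm_num, Real.log_pow]; push_cast; ring
  have l32 : Real.log 32 = 5 * Real.log 2 := by
    rw [show (32:ℝ) = 2^5 by norm_num, Real.log_pow]; push_cast; ring
  have heq : 2 * (Real.log 3)^2 = 5 * (Real.log 2)^2 := by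
    rw [l9, l32] at hlog
    rw [theta2] at hlog
    field_simp at hlog
    nlinarith [log2_pos]
  have hb : (19:ℝ)/12 * Real.log 2 < Real.log 3 := by
    have := theta2_gt
    rw [theta2, lt_div_iff₀ log2_pos] at this
    linarith
  nlinarith [log2_pos, mul_pos log2_pos log2_pos,
    mul_pos (sub_pos.mpr hb) (by nlinarith [log2_pos] : (0:ℝ) < Real.log 3 + 19/12 * Real.log 2)]

theorem dfun_not_convergent :
    Tendsto (fun k : ℕ => dfun (2 ^ k)) atTop (nhds (2 / 5)) ∧
    Tendsto (fun k : ℕ => dfun (9 * 2 ^ k)) atTop (nhds (64 / (5 * (9 : ℝ) ^ theta2))) ∧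
    (2 : ℝ) / 5 ≠ 64 / (5 * (9 : ℝ) ^ theta2) ∧
    ¬ ∃ L : ℝ, Tendsto (fun u : ℕ => dfun u) atTop (nhds L) := by
  refine ⟨limit1, limit2, ne25, ?_⟩
  rintro ⟨L, hL⟩
  have t1 : Tendsto (fun k : ℕ => 2^k) atTop atTop :=
    tendsto_atTop_mono (fun k => (Nat.lt_two_pow_self (n := k)).le) tendsto_id
  have t2 : Tendsto (fun k : ℕ => 9*2^k) atTop atTop :=
    tendsto_atTop_mono (fun k => le_trans (Nat.lt_two_pow_self (n := k)).le (by omega)) tendsto_id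
  have e1 := tendsto_nhds_unique (hL.comp t1) limit1
  have e2 := tendsto_nhds_unique (hL.comp t2) limit2
  exact ne25 (e1 ▸ e2 ▸ rfl)
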